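/- Let b be a real number and for integers n ≥ 3 define v_n(3/2,b) = (∑_{k=1}^{n−2} 1/k) + ((3/2)·n+b)/(n(n−1)) − ln n. Then lim_{n→∞} n³·(v_n(3/2,b) − v_{n+1}(3/2,b)) = 2b + 5/6. -/

import Mathlib

open Filter Topology

noncomputable def v (a b : ℝ) (n : ℕ) : ℝ :=
  (∑ k ∈ Finset.Icc 1 (n - 2), (1 : ℝ) / k) + (a * n + b) / ((n : ℝ) * ((n : ℝ) - 1))
    - Real.log n

theorem diff_rate_three (b : ℝ) :
    Tendsto (fun n : ℕ => (n : ℝ) ^ 3 * (v (3 / 2) b n - v (3 / 2) b (n + 1))) atTop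
      (𝓝 (2 * b + 5 / 6)) := by
  set c : ℝ := 2 * b + 5 / 6 with hc
  -- the two pieces
  have h1 : Tendsto (fun n : ℕ =>
      ((c + 1/(2*(n:ℝ)) - 1/(3*(n:ℝ)^2)) / (1 - 1/(n:ℝ)^2))) atTop (𝓝 c) := by
    have hinv : Tendsto (fun n : ℕ => 1/(n:ℝ)) atTop (𝓝 0) :=
      tendsto_one_div_atTop_nhds_zero_nat
    have hinv2 : Tendsto (fun n : ℕ => 1/(n:ℝ)^2) atTop (𝓝 0) := by
      have := hinv.mul hinv
      simpa [one_div, ← mul_inv, ← sq] using this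
    have hnum : Tendsto (fun n : ℕ => c + 1/(2*(n:ℝ)) - 1/(3*(n:ℝ)^2)) atTop
        (𝓝 (c + 0 - 0)) := by
      apply Tendsto.sub
      · apply Tendsto.add tendsto_const_nhds
        have := hinv.const_mul (1/2 : ℝ)
        simpa [one_div, mul_inv, mul_comm] using this
      · have := hinv2.const_mul (1/3 : ℝ)
        simpa [one_div, mul_inv, mul_comm] using this
    have hden : Tendsto (fun n : ℕ => 1 - 1/(n:ℝ)^2) atTop (𝓝 (1 - 0)) :=
      Tendsto.sub tendsto_const_nhds hinv2
    have := hnum.div hden (by norm_num)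
    rw [add_zero, sub_zero, sub_zero, div_one] at this
    exact this
  have h2 : Tendsto (fun n : ℕ =>
      (n:ℝ)^3 * (Real.log (1 + 1/(n:ℝ)) - (1/(n:ℝ) - 1/(2*(n:ℝ)^2) + 1/(3*(n:ℝ)^3))))
      atTop (𝓝 0) := by
    apply squeeze_zero_norm' (a := fun n : ℕ => 1/((n:ℝ) - 1))
    · filter_upwards [eventually_ge_atTop 3] with n hn
      have hn3 : (3:ℝ) ≤ (n:ℝ) := by exact_mod_cast hn
      have hn0 : (0:ℝ) < n := by linarith
      have hx : |(-(1/(n:ℝ)))| < 1 := by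
        rw [abs_neg, abs_of_pos (by positivity)]
        rw [div_lt_one hn0]; linarith
      have key := Real.abs_log_sub_add_sum_range_le hx 3
      have habs : |(-(1/(n:ℝ)))| = 1/(n:ℝ) := by
        rw [abs_neg, abs_of_pos (by positivity)]
      rw [habs] at key
      have hsum : (∑ i ∈ Finset.range 3, (-(1/(n:ℝ)))^(i+1)/(i+1)) =
          -(1/(n:ℝ)) + (1/(n:ℝ))^2/2 - (1/(n:ℝ))^3/3 := by
        simp [Finset.sum_range_succ]
        ring
      rw [hsum] at key
      have hone : (1 : ℝ) - (-(1/(n:ℝ))) = 1 + 1/(n:ℝ) := by ring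
      rw [hone] at key
      have hE : Real.log (1 + 1/(n:ℝ)) - (1/(n:ℝ) - 1/(2*(n:ℝ)^2) + 1/(3*(n:ℝ)^3)) =
          (-(1/(n:ℝ)) + (1/(n:ℝ))^2/2 - (1/(n:ℝ))^3/3) + Real.log (1 + 1/(n:ℝ)) := by
        field_simp
        ring
      have hb : ‖(n:ℝ)^3 * (Real.log (1 + 1/(n:ℝ)) -
          (1/(n:ℝ) - 1/(2*(n:ℝ)^2) + 1/(3*(n:ℝ)^3)))‖ ≤ (n:ℝ)^3 * ((1/(n:ℝ))^4/(1 - 1/(n:ℝ))) := by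
        rw [Real.norm_eq_abs, abs_mul, abs_of_pos (by positivity : (0:ℝ) < (n:ℝ)^3), hE]
        exact mul_le_mul_of_nonneg_left key (by positivity)
      refine hb.trans (le_of_eq ?_)
      have h1n : (1:ℝ) - 1/(n:ℝ) ≠ 0 := by
        have : 1/(n:ℝ) ≤ 1/3 := by
          apply div_le_div_of_nonneg_left <;> linarith
        intro h; rw [sub_eq_zero] at h; rw [← h] at this; linarith
      field_simp
    · have ht : Tendsto (fun n : ℕ => (n:ℝ) - 1) atTop atTop :=
        tendsto_atTop_add_const_right _ (-1) tendsto_natCast_atTop_atTop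
      simpa [one_div, Function.comp_def] using tendsto_inv_atTop_zero.comp ht
  have hsumlim := h1.add h2
  rw [add_zero] at hsumlim
  apply hsumlim.congr'
  filter_upwards [eventually_ge_atTop 3] with n hn
  have hn3 : (3:ℝ) ≤ (n:ℝ) := by exact_mod_cast hn
  have hn0 : (n:ℝ) ≠ 0 := by linarith
  have hn1 : (n:ℝ) - 1 ≠ 0 := by intro h; rw [sub_eq_zero] at h; linarith [h.symm ▸ hn3]
  have hn1' : (n:ℝ) + 1 ≠ 0 := by linarith
  -- sum telescoping
  have hkey : Finset.Icc 1 ((n+1) - 2) = insert (n-2+1) (Finset.Icc 1 (n-2)) := by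
    rw [Finset.insert_Icc_right_eq_Icc_add_one (by omega)]
    congr 1
    omega
  have hsum : (∑ k ∈ Finset.Icc 1 ((n+1) - 2), (1:ℝ)/k) =
      (∑ k ∈ Finset.Icc 1 (n-2), (1:ℝ)/k) + 1/((n:ℝ) - 1) := by
    rw [hkey, Finset.sum_insert (by simp)]
    have : ((n - 2 + 1 : ℕ) : ℝ) = (n:ℝ) - 1 := by
      have : n - 2 + 1 = n - 1 := by omega
      rw [this]
      push_cast [Nat.cast_sub (by omega : 1 ≤ n)]
      ring
    rw [this]
    ring
  have hlog : Real.log (1 + 1/(n:ℝ)) = Real.log ((n:ℝ) + 1) - Real.log (n:ℝ) := by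
    rw [show (1:ℝ) + 1/(n:ℝ) = ((n:ℝ)+1)/(n:ℝ) by field_simp, Real.log_div hn1' hn0]
  simp only [v, hsum, hlog]
  push_cast
  have hn2 : (n:ℝ)^2 - 1 ≠ 0 := by
    intro h
    have : ((n:ℝ) - 1) * ((n:ℝ) + 1) = 0 := by ring_nf; linarith [h]
    rcases mul_eq_zero.1 this with h' | h' <;> [exact hn1 h'; exact hn1' h']
  rw [hc, add_sub_cancel_right]
  field_simp
  ring
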